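/- arXiv:1512.06143 — 2 statements merged into one kernel-verified Lean document; each statement's English description precedes it below -/
import Mathlib

section
/- Let S₁,…,S_k be subsets of [n] constructed as follows: for a string x ∈ {0,1}ⁿ with n = C(k, k/2) and a bijection σ from the family F of all k/2-element subsets of [k] to [n], start with each Sᵢ = [n] and, for each j ∈ [n] with x_j = 0, remove j from Sᵢ for every i ∈ σ⁻¹(j) (the unique (k/2)-subset Q with σ(Q) = j). Then for any Q = {i₁,…,i_{k/2}} ∈ F, the union S_{i₁} ∪ ⋯ ∪ S_{i_{k/2}} equals [n] if and only if x_{σ(Q)} = 1. -/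
/-- In the hard-distribution embedding for the Coverage problem: with `n = C(k, k/2)`,
a bijection `e` from the `(k/2)`-subsets of `[k]` to `[n]`, and sets
`Sᵢ = [n] \ {j : x_j = 0 and i ∈ e⁻¹(j)}`, for every `(k/2)`-subset `Q` the union
`⋃_{i ∈ Q} Sᵢ` equals `[n]` iff `x_{e(Q)} = 1`. -/
theorem coverage_union_eq_univ_iff {k : ℕ} (hk : 0 < k) (hke : Even k)
    (e : {Q : Finset (Fin k) // Q.card = k / 2} ≃ Fin (k.choose (k / 2)))
    (x : Fin (k.choose (k / 2)) → Bool)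
    (S : Fin k → Set (Fin (k.choose (k / 2))))
    (hS : ∀ i j, j ∈ S i ↔ ¬(x j = false ∧ i ∈ (e.symm j).1)) :
    ∀ Q : {Q : Finset (Fin k) // Q.card = k / 2},
      (⋃ i ∈ Q.1, S i) = Set.univ ↔ x (e Q) = true := by
  intro Q
  have hk2 : 0 < k / 2 := by
    obtain ⟨m, rfl⟩ := hke
    omega
  have hQne : Q.1.Nonempty := Finset.card_pos.mp (by rw [Q.2]; exact hk2)
  constructor
  · intro h
    have : e.toFun Q ∈ ⋃ i ∈ Q.1, S i := by rw [h]; trivial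
    simp only [Set.mem_iUnion] at this
    obtain ⟨i, hi, hmem⟩ := this
    have := (hS i (e Q)).mp hmem
    rw [Equiv.symm_apply_apply] at this
    by_contra hx
    exact this ⟨Bool.not_eq_true _ |>.mp hx, hi⟩
  · intro hx
    ext j
    simp only [Set.mem_iUnion, Set.mem_univ, iff_true]
    by_cases hxj : x j = false
    · have hne : (e.symm j).1 ≠ Q.1 := by
        intro hEq
        have : e.symm j = Q := Subtype.ext hEq
        have : j = e Q := by rw [← this, Equiv.apply_symm_apply]
        rw [this, hx] at hxj; exact Bool.noConfusion hxj
      have hnsub : ¬ Q.1 ⊆ (e.symm j).1 := by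
        intro hsub
        exact hne ((Finset.eq_of_subset_of_card_le hsub (by rw [Q.2, (e.symm j).2])).symm)
      obtain ⟨i, hi, hni⟩ := Finset.not_subset.mp hnsub
      exact ⟨i, hi, (hS i j).mpr fun ⟨_, h⟩ => hni h⟩
    · obtain ⟨i, hi⟩ := hQne
      exact ⟨i, hi, (hS i j).mpr fun ⟨h, _⟩ => hxj h⟩
end

section
/- In the construction of the previous claim, for any Q ∈ F with Q = {i₁,…,i_{k/2}}, the union S_{i₁} ∪ ⋯ ∪ S_{i_{k/2}} is either [n] or [n] \ {j} for a single element j = σ(Q). -/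
/-- In the hard-distribution embedding for the Coverage problem, for every `(k/2)`-subset
`Q` of `[k]`, the union `⋃_{i ∈ Q} Sᵢ` is either all of `[n]` or `[n] \ {e(Q)}`. -/
theorem coverage_union_eq_univ_or_erase {k : ℕ} (hk : 0 < k) (hke : Even k)
    (e : {Q : Finset (Fin k) // Q.card = k / 2} ≃ Fin (k.choose (k / 2)))
    (x : Fin (k.choose (k / 2)) → Bool)
    (S : Fin k → Set (Fin (k.choose (k / 2))))
    (hS : ∀ i j, j ∈ S i ↔ ¬(x j = false ∧ i ∈ (e.symm j).1)) :
    ∀ Q : {Q : Finset (Fin k) // Q.card = k / 2},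
      (⋃ i ∈ Q.1, S i) = Set.univ ∨ (⋃ i ∈ Q.1, S i) = Set.univ \ {e Q} := by
  intro Q
  have hk2 : 0 < k / 2 := by
    obtain ⟨m, rfl⟩ := hke
    omega
  have hQne : Q.1.Nonempty := Finset.card_pos.mp (by rw [Q.2]; exact hk2)
  have key : ∀ j, j ∉ (⋃ i ∈ Q.1, S i) ↔ (x j = false ∧ j = e Q) := by
    intro j
    simp only [Set.mem_iUnion, not_exists]
    constructor
    · intro h
      have h' : ∀ i ∈ Q.1, x j = false ∧ i ∈ (e.symm j).1 := by
        intro i hi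
        have := h i hi
        rw [hS] at this
        tauto
      obtain ⟨i0, hi0⟩ := hQne
      refine ⟨(h' i0 hi0).1, ?_⟩
      have hsub : Q.1 ⊆ (e.symm j).1 := fun i hi => (h' i hi).2
      have heq : Q = e.symm j := by
        apply Subtype.ext
        apply Finset.eq_of_subset_of_card_le hsub
        rw [Q.2, (e.symm j).2]
      rw [heq, Equiv.apply_symm_apply]
    · rintro ⟨hx, rfl⟩ i hi
      simp [hS, e.symm_apply_apply, hx, hi]
  by_cases hxe : x (e Q) = false
  · right
    ext j
    simp only [Set.mem_diff, Set.mem_univ, Set.mem_singleton_iff, true_and]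
    constructor
    · intro hj hje
      exact ((key j).mpr ⟨hje ▸ hxe, hje⟩) hj
    · intro hj
      by_contra hc
      exact hj ((key j).mp hc).2
  · left
    ext j
    simp only [Set.mem_univ, iff_true]
    by_contra hc
    obtain ⟨hx, rfl⟩ := (key j).mp hc
    exact hxe hx
end
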